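/- For every α ∈ (0,1) and every k ∈ ℕ ∪ {0} there exists a constant C_{α,k} > 0 such that for each (x,y) ∈ (0,1)², the norm of the k-th (total) derivative of ψ_α at (x,y) satisfies |D^k ψ_α(x,y)| ≤ C_{α,k} (sin(πx) + sin(πy))^{2−α−k}. -/

import Mathlib

open Set Real

open scoped ContDiff

noncomputable section

/-- The stream function `ψ_α(x,y) = 2^α sin(πx) sin(πy) / (sin(πx) + sin(πy))^α`. -/
def psiα (α : ℝ) : ℝ × ℝ → ℝ := fun p =>
  2 ^ α * (Real.sin (π * p.1) * Real.sin (π * p.2)) /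
    (Real.sin (π * p.1) + Real.sin (π * p.2)) ^ α


lemma iteratedDeriv_sin_eq (i : ℕ) :
    iteratedDeriv i Real.sin = fun x => Real.sin (x + i * (π / 2)) := by
  induction i with
  | zero => simp
  | succ n ih =>
    rw [iteratedDeriv_succ, ih]
    funext x
    have h : HasDerivAt (fun x : ℝ => Real.sin (x + n * (π / 2)))
        (Real.cos (x + n * (π / 2)) * 1) x :=
      ((hasDerivAt_id x).add_const _).sin
    rw [h.deriv, mul_one, ← Real.sin_add_pi_div_two]
    congr 1
    push_cast
    ring

lemma norm_iteratedFDeriv_sin_le (i : ℕ) (x : ℝ) : ‖iteratedFDeriv ℝ i Real.sin x‖ ≤ 1 := by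
  rw [norm_iteratedFDeriv_eq_norm_iteratedDeriv, iteratedDeriv_sin_eq]
  simp only [Real.norm_eq_abs]
  exact abs_le.mpr ⟨Real.neg_one_le_sin _, Real.sin_le_one _⟩

lemma sin_comp_clm_bound (L : ℝ × ℝ →L[ℝ] ℝ) (hL : ‖L‖ ≤ π) (i : ℕ) (p : ℝ × ℝ) :
    ‖iteratedFDeriv ℝ i (Real.sin ∘ L) p‖ ≤ π ^ i := by
  rw [L.iteratedFDeriv_comp_right Real.contDiff_sin p (le_top : (i : WithTop ℕ∞) ≤ ⊤)]
  calc ‖(iteratedFDeriv ℝ i Real.sin (L p)).compContinuousLinearMap fun _ => L‖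
      ≤ ‖iteratedFDeriv ℝ i Real.sin (L p)‖ * ∏ _j : Fin i, ‖L‖ :=
        ContinuousMultilinearMap.norm_compContinuousLinearMap_le _ _
    _ ≤ 1 * π ^ i := by
        apply mul_le_mul (norm_iteratedFDeriv_sin_le _ _) _ _ zero_le_one
        · rw [Finset.prod_const, Finset.card_univ, Fintype.card_fin]
          exact pow_le_pow_left₀ (norm_nonneg _) hL i
        · positivity
    _ = π ^ i := one_mul _

lemma iteratedDerivWithin_rpow (c : ℝ) (i : ℕ) :
    EqOn (iteratedDerivWithin i (fun t : ℝ => t ^ c) (Ioi (0:ℝ)))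
      (fun t => (∏ j ∈ Finset.range i, (c - j)) * t ^ (c - i)) (Ioi (0:ℝ)) := by
  induction i with
  | zero => intro t ht; simp
  | succ n ih =>
    intro t ht
    rw [iteratedDerivWithin_succ,
      derivWithin_congr ih (ih ht), derivWithin_of_isOpen isOpen_Ioi ht]
    have h : HasDerivAt (fun t : ℝ => (∏ j ∈ Finset.range n, (c - j)) * t ^ (c - n))
        ((∏ j ∈ Finset.range n, (c - j)) * ((c - n) * t ^ (c - n - 1))) t :=
      (Real.hasDerivAt_rpow_const (Or.inl (ne_of_gt ht))).const_mul _
    rw [h.deriv, Finset.prod_range_succ]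
    have h2 : c - ((n : ℝ) + 1) = c - n - 1 := by ring
    push_cast
    rw [h2]
    ring

lemma norm_iteratedFDerivWithin_rpow (c : ℝ) (i : ℕ) {t : ℝ} (ht : 0 < t) :
    ‖iteratedFDerivWithin ℝ i (fun t : ℝ => t ^ c) (Ioi 0) t‖ =
      |∏ j ∈ Finset.range i, (c - j)| * t ^ (c - i) := by
  rw [norm_iteratedFDerivWithin_eq_norm_iteratedDerivWithin, iteratedDerivWithin_rpow c i ht,
    Real.norm_eq_abs, abs_mul, abs_of_pos (Real.rpow_pos_of_pos ht _)]

lemma sum_choose_le (n : ℕ) (w : ℕ → ℝ) (M : ℝ)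
    (h : ∀ i ∈ Finset.range (n + 1), w i ≤ M) :
    ∑ i ∈ Finset.range (n + 1), (n.choose i : ℝ) * w i ≤ 2 ^ n * M := by
  calc ∑ i ∈ Finset.range (n + 1), (n.choose i : ℝ) * w i
      ≤ ∑ i ∈ Finset.range (n + 1), (n.choose i : ℝ) * M :=
        Finset.sum_le_sum fun i hi => mul_le_mul_of_nonneg_left (h i hi) (Nat.cast_nonneg _)
    _ = 2 ^ n * M := by
        rw [← Finset.sum_mul, ← Nat.cast_sum, Nat.sum_range_choose]
        push_cast
        ring

/-! ### Basic functions -/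

def sfun : ℝ × ℝ → ℝ := fun q => Real.sin (π * q.1) + Real.sin (π * q.2)

def Uset : Set (ℝ × ℝ) := {q | 0 < sfun q}

def gfun (α : ℝ) : ℝ → ℝ := fun t => t ^ (-α)

def Lfst : ℝ × ℝ →L[ℝ] ℝ := π • ContinuousLinearMap.fst ℝ ℝ ℝ
def Lsnd : ℝ × ℝ →L[ℝ] ℝ := π • ContinuousLinearMap.snd ℝ ℝ ℝ

def f1 : ℝ × ℝ → ℝ := Real.sin ∘ Lfst
def f2 : ℝ × ℝ → ℝ := Real.sin ∘ Lsnd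

lemma Lfst_apply (q : ℝ × ℝ) : Lfst q = π * q.1 := by
  simp [Lfst]

lemma Lsnd_apply (q : ℝ × ℝ) : Lsnd q = π * q.2 := by
  simp [Lsnd]

lemma f1_apply (q : ℝ × ℝ) : f1 q = Real.sin (π * q.1) := by
  simp [f1, Lfst_apply]

lemma f2_apply (q : ℝ × ℝ) : f2 q = Real.sin (π * q.2) := by
  simp [f2, Lsnd_apply]

lemma norm_Lfst_le : ‖Lfst‖ ≤ π := by
  apply ContinuousLinearMap.opNorm_le_bound _ Real.pi_pos.le
  intro q
  rw [Lfst_apply, Real.norm_eq_abs, abs_mul, abs_of_pos Real.pi_pos]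
  exact mul_le_mul_of_nonneg_left (norm_fst_le q) Real.pi_pos.le

lemma norm_Lsnd_le : ‖Lsnd‖ ≤ π := by
  apply ContinuousLinearMap.opNorm_le_bound _ Real.pi_pos.le
  intro q
  rw [Lsnd_apply, Real.norm_eq_abs, abs_mul, abs_of_pos Real.pi_pos]
  exact mul_le_mul_of_nonneg_left (norm_snd_le q) Real.pi_pos.le

lemma f1_contDiff {n : WithTop ℕ∞} : ContDiff ℝ n f1 :=
  Real.contDiff_sin.comp Lfst.contDiff

lemma f2_contDiff {n : WithTop ℕ∞} : ContDiff ℝ n f2 :=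
  Real.contDiff_sin.comp Lsnd.contDiff

lemma sfun_eq : sfun = fun q => f1 q + f2 q := by
  funext q
  rw [f1_apply, f2_apply]; rfl

lemma sfun_contDiff {n : WithTop ℕ∞} : ContDiff ℝ n sfun := by
  rw [sfun_eq]; exact f1_contDiff.add f2_contDiff

lemma Uopen : IsOpen Uset :=
  isOpen_lt continuous_const (sfun_contDiff (n := 0)).continuous

lemma f1_bound (i : ℕ) (p : ℝ × ℝ) : ‖iteratedFDeriv ℝ i f1 p‖ ≤ π ^ i :=
  sin_comp_clm_bound Lfst norm_Lfst_le i p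

lemma f2_bound (i : ℕ) (p : ℝ × ℝ) : ‖iteratedFDeriv ℝ i f2 p‖ ≤ π ^ i :=
  sin_comp_clm_bound Lsnd norm_Lsnd_le i p

lemma sfun_bound (i : ℕ) (hi : 1 ≤ i) (p : ℝ × ℝ) :
    ‖iteratedFDeriv ℝ i sfun p‖ ≤ (2 * π) ^ i := by
  rw [sfun_eq]
  rw [iteratedFDeriv_add_apply' f1_contDiff.contDiffAt f2_contDiff.contDiffAt]
  calc ‖iteratedFDeriv ℝ i f1 p + iteratedFDeriv ℝ i f2 p‖
      ≤ ‖iteratedFDeriv ℝ i f1 p‖ + ‖iteratedFDeriv ℝ i f2 p‖ := norm_add_le _ _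
    _ ≤ π ^ i + π ^ i := add_le_add (f1_bound i p) (f2_bound i p)
    _ = 2 * π ^ i := by ring
    _ ≤ 2 ^ i * π ^ i := by
        have h2 : (2:ℝ) ≤ 2 ^ i := le_self_pow₀ one_le_two (by omega)
        have : (0:ℝ) ≤ π ^ i := by positivity
        nlinarith
    _ = (2 * π) ^ i := (mul_pow 2 π i).symm

lemma sfun_le_two (p : ℝ × ℝ) : sfun p ≤ 2 := by
  have h1 := Real.sin_le_one (π * p.1)
  have h2 := Real.sin_le_one (π * p.2)
  simp only [sfun]
  linarith

lemma gfun_contDiffOn (α : ℝ) {n : WithTop ℕ∞} : ContDiffOn ℝ n (gfun α) (Ioi 0) :=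
  fun t ht => (Real.contDiffAt_rpow_const_of_ne (ne_of_gt ht)).contDiffWithinAt


lemma Uset_def : Uset = {q | 0 < sfun q} := rfl

lemma sfun_apply (q : ℝ × ℝ) : sfun q = Real.sin (π * q.1) + Real.sin (π * q.2) := rfl

lemma one_le_pi : (1:ℝ) ≤ π := by linarith [Real.pi_gt_three]

lemma mem_Uset {p : ℝ × ℝ} (hp : p ∈ Uset) : 0 < sfun p := by
  rw [Uset_def] at hp; exact hp

lemma mapsTo_sfun : MapsTo sfun Uset (Ioi 0) := fun q hq => mem_Uset hq

lemma G_bound {α : ℝ} (hα0 : 0 < α) (k : ℕ) :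
    ∃ B : ℝ, 0 < B ∧ ∀ m ≤ k, ∀ p ∈ Uset,
      ‖iteratedFDerivWithin ℝ m (gfun α ∘ sfun) Uset p‖ ≤
        B * (sfun p) ^ (-α - (m : ℝ)) := by
  set cR : ℕ → ℝ := fun i => |∏ j ∈ Finset.range i, (-α - (j : ℝ))| with hcR
  have hcRpos : ∀ i, 0 < cR i := by
    intro i
    simp only [hcR, abs_pos]
    apply Finset.prod_ne_zero_iff.mpr
    intro j _
    have hj : (0:ℝ) ≤ (j:ℝ) := Nat.cast_nonneg j
    intro hzero
    linarith
  set SC : ℝ := ∑ i ∈ Finset.range (k + 1), cR i with hSC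
  have hSCpos : 0 < SC :=
    Finset.sum_pos (fun i _ => hcRpos i) ⟨0, Finset.mem_range.mpr (Nat.succ_pos k)⟩
  refine ⟨((Nat.factorial k : ℕ) : ℝ) * (SC * 2 ^ k) * (2 * π) ^ k, by positivity, ?_⟩
  intro m hm p hp
  have hA0 : 0 < sfun p := mem_Uset hp
  have hA2 : sfun p ≤ 2 := sfun_le_two p
  have hX : (0:ℝ) < (sfun p) ^ (-α - (m : ℝ)) := Real.rpow_pos_of_pos hA0 _
  have key := norm_iteratedFDerivWithin_comp_le (n := m) (N := ω)
    (gfun_contDiffOn α) (sfun_contDiff.contDiffOn) le_top isOpen_Ioi.uniqueDiffOn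
    Uopen.uniqueDiffOn mapsTo_sfun hp
    (C := SC * 2 ^ k * (sfun p) ^ (-α - (m : ℝ))) (D := 2 * π) ?_ ?_
  · refine key.trans ?_
    have h1 : ((Nat.factorial m : ℕ) : ℝ) ≤ ((Nat.factorial k : ℕ) : ℝ) := by exact_mod_cast Nat.factorial_le hm
    have h2 : (2 * π) ^ m ≤ (2 * π) ^ k :=
      pow_le_pow_right₀ (by linarith [one_le_pi]) hm
    have h3 : ((Nat.factorial m : ℕ) : ℝ) * (2 * π) ^ m ≤ ((Nat.factorial k : ℕ) : ℝ) * (2 * π) ^ k :=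
      mul_le_mul h1 h2 (by positivity) (by positivity)
    calc ((Nat.factorial m : ℕ) : ℝ) * (SC * 2 ^ k * (sfun p) ^ (-α - (m : ℝ))) * (2 * π) ^ m
        = (((Nat.factorial m : ℕ) : ℝ) * (2 * π) ^ m) * ((SC * 2 ^ k) * (sfun p) ^ (-α - (m : ℝ))) := by ring
      _ ≤ (((Nat.factorial k : ℕ) : ℝ) * (2 * π) ^ k) * ((SC * 2 ^ k) * (sfun p) ^ (-α - (m : ℝ))) := by
          apply mul_le_mul_of_nonneg_right h3 (by positivity)
      _ = ((Nat.factorial k : ℕ) : ℝ) * (SC * 2 ^ k) * (2 * π) ^ k * (sfun p) ^ (-α - (m : ℝ)) := by ring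
  · -- bound on derivatives of gfun at sfun p
    intro i hi
    have hgeq : gfun α = fun t : ℝ => t ^ (-α) := rfl
    rw [hgeq, norm_iteratedFDerivWithin_rpow (-α) i hA0]
    have e1 : cR i ≤ SC := by
      rw [hSC]
      exact Finset.single_le_sum (fun j _ => (hcRpos j).le)
        (Finset.mem_range.mpr (Nat.lt_succ_of_le (hi.trans hm)))
    have e2 : (sfun p) ^ (-α - (i : ℝ)) ≤ 2 ^ k * (sfun p) ^ (-α - (m : ℝ)) := by
      have hexp : (-α - (i : ℝ)) = (-α - (m : ℝ)) + ((m : ℝ) - (i : ℝ)) := by ring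
      rw [hexp, Real.rpow_add hA0]
      have e3 : (sfun p) ^ ((m : ℝ) - (i : ℝ)) ≤ 2 ^ k := by
        calc (sfun p) ^ ((m : ℝ) - (i : ℝ)) ≤ (2:ℝ) ^ ((m : ℝ) - (i : ℝ)) :=
              Real.rpow_le_rpow hA0.le hA2 (by
                have : (i : ℝ) ≤ (m : ℝ) := by exact_mod_cast hi
                linarith)
          _ ≤ (2:ℝ) ^ ((k : ℕ) : ℝ) := Real.rpow_le_rpow_of_exponent_le one_le_two (by
                have : (m : ℝ) ≤ (k : ℝ) := by exact_mod_cast hm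
                have : (0:ℝ) ≤ (i : ℝ) := Nat.cast_nonneg i
                push_cast
                linarith)
          _ = 2 ^ k := Real.rpow_natCast 2 k
      calc (sfun p) ^ (-α - (m : ℝ)) * (sfun p) ^ ((m : ℝ) - (i : ℝ))
          ≤ (sfun p) ^ (-α - (m : ℝ)) * 2 ^ k :=
            mul_le_mul_of_nonneg_left e3 hX.le
        _ = 2 ^ k * (sfun p) ^ (-α - (m : ℝ)) := mul_comm _ _
    have hcast : -α - ((i : ℕ) : ℝ) = -α - (i : ℝ) := rfl
    calc cR i * (sfun p) ^ (-α - (i : ℝ))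
        ≤ SC * (2 ^ k * (sfun p) ^ (-α - (m : ℝ))) := by
          apply mul_le_mul e1 e2 (by positivity) hSCpos.le
      _ = SC * 2 ^ k * (sfun p) ^ (-α - (m : ℝ)) := by ring
  · intro i hi1 _
    rw [iteratedFDerivWithin_of_isOpen i Uopen hp]
    exact sfun_bound i hi1 p

lemma hGU_contDiffOn (α : ℝ) {n : WithTop ℕ∞} : ContDiffOn ℝ n (gfun α ∘ sfun) Uset :=
  (gfun_contDiffOn α).comp sfun_contDiff.contDiffOn mapsTo_sfun

lemma inner_bound {α : ℝ} (hα0 : 0 < α) (k : ℕ) :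
    ∃ E : ℝ, 0 < E ∧ ∀ m ≤ k, ∀ p ∈ Uset, 0 ≤ Real.sin (π * p.1) → 0 ≤ Real.sin (π * p.2) →
      ‖iteratedFDerivWithin ℝ m (fun q => f2 q * (gfun α ∘ sfun) q) Uset p‖ ≤
        E * (sfun p) ^ (1 - α - (m : ℝ)) := by
  obtain ⟨B, hB, hG⟩ := G_bound hα0 k
  refine ⟨2 ^ k * (π ^ k * 2 ^ k * B), by positivity, ?_⟩
  intro m hm p hp hs1 hs2
  have hA0 : 0 < sfun p := mem_Uset hp
  have hA2 : sfun p ≤ 2 := sfun_le_two p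
  have hY : (0:ℝ) < (sfun p) ^ (1 - α - (m : ℝ)) := Real.rpow_pos_of_pos hA0 _
  have hmul := norm_iteratedFDerivWithin_mul_le (N := ω) (n := m) f2_contDiff.contDiffOn
    (hGU_contDiffOn α) Uopen.uniqueDiffOn hp le_top
  refine hmul.trans ?_
  have hsum := sum_choose_le m (fun i => ‖iteratedFDerivWithin ℝ i f2 Uset p‖ *
      ‖iteratedFDerivWithin ℝ (m - i) (gfun α ∘ sfun) Uset p‖)
      (π ^ k * 2 ^ k * B * (sfun p) ^ (1 - α - (m : ℝ))) ?_
  · calc ∑ i ∈ Finset.range (m + 1), (m.choose i : ℝ) *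
          ‖iteratedFDerivWithin ℝ i f2 Uset p‖ *
          ‖iteratedFDerivWithin ℝ (m - i) (gfun α ∘ sfun) Uset p‖
        = ∑ i ∈ Finset.range (m + 1), (m.choose i : ℝ) *
          (‖iteratedFDerivWithin ℝ i f2 Uset p‖ *
           ‖iteratedFDerivWithin ℝ (m - i) (gfun α ∘ sfun) Uset p‖) := by
          simp only [mul_assoc]
      _ ≤ 2 ^ m * (π ^ k * 2 ^ k * B * (sfun p) ^ (1 - α - (m : ℝ))) := hsum
      _ ≤ 2 ^ k * (π ^ k * 2 ^ k * B * (sfun p) ^ (1 - α - (m : ℝ))) := by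
          apply mul_le_mul_of_nonneg_right (pow_le_pow_right₀ one_le_two hm) (by positivity)
      _ = 2 ^ k * (π ^ k * 2 ^ k * B) * (sfun p) ^ (1 - α - (m : ℝ)) := by ring
  · intro i hi
    have him : i ≤ m := Nat.lt_succ_iff.mp (Finset.mem_range.mp hi)
    rcases Nat.eq_zero_or_pos i with h0 | h1
    · subst h0
      simp only [norm_iteratedFDerivWithin_zero, Nat.sub_zero]
      have hf2p : ‖f2 p‖ ≤ sfun p := by
        rw [f2_apply, Real.norm_eq_abs, abs_of_nonneg hs2, sfun_apply]
        linarith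
      have hGm := hG m hm p hp
      have hone : (1:ℝ) ≤ π ^ k * 2 ^ k := by
        have h1 : (1:ℝ) ≤ π ^ k := one_le_pow₀ one_le_pi
        have h2 : (1:ℝ) ≤ (2:ℝ) ^ k := one_le_pow₀ one_le_two
        nlinarith
      calc ‖f2 p‖ * ‖iteratedFDerivWithin ℝ m (gfun α ∘ sfun) Uset p‖
          ≤ (sfun p) * (B * (sfun p) ^ (-α - (m : ℝ))) :=
            mul_le_mul hf2p hGm (norm_nonneg _) hA0.le
        _ = B * ((sfun p) ^ (1:ℝ) * (sfun p) ^ (-α - (m : ℝ))) := by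
            rw [Real.rpow_one]; ring
        _ = B * (sfun p) ^ (1 - α - (m : ℝ)) := by
            rw [← Real.rpow_add hA0]
            have he : (1:ℝ) + (-α - (m : ℝ)) = 1 - α - (m : ℝ) := by ring
            rw [he]
        _ = 1 * (B * (sfun p) ^ (1 - α - (m : ℝ))) := by ring
        _ ≤ (π ^ k * 2 ^ k) * (B * (sfun p) ^ (1 - α - (m : ℝ))) :=
            mul_le_mul_of_nonneg_right hone (by positivity)
        _ = π ^ k * 2 ^ k * B * (sfun p) ^ (1 - α - (m : ℝ)) := by ring
    · have hf2i : ‖iteratedFDerivWithin ℝ i f2 Uset p‖ ≤ π ^ k := by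
        rw [iteratedFDerivWithin_of_isOpen i Uopen hp]
        exact (f2_bound i p).trans (pow_le_pow_right₀ one_le_pi (him.trans hm))
      have hGmi := hG (m - i) ((Nat.sub_le m i).trans hm) p hp
      have hcast : ((m - i : ℕ) : ℝ) = (m : ℝ) - (i : ℝ) := by
        rw [Nat.cast_sub him]
      have hexp : -α - ((m - i : ℕ) : ℝ) = (1 - α - (m : ℝ)) + ((i : ℝ) - 1) := by
        rw [hcast]; ring
      have hAi : (sfun p) ^ ((i : ℝ) - 1) ≤ 2 ^ k := by
        calc (sfun p) ^ ((i : ℝ) - 1) ≤ (2:ℝ) ^ ((i : ℝ) - 1) :=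
              Real.rpow_le_rpow hA0.le hA2 (by
                have : (1:ℝ) ≤ (i:ℝ) := by exact_mod_cast h1
                linarith)
          _ ≤ (2:ℝ) ^ ((k : ℕ) : ℝ) := Real.rpow_le_rpow_of_exponent_le one_le_two (by
                have : (i : ℝ) ≤ (k : ℝ) := by exact_mod_cast him.trans hm
                linarith)
          _ = 2 ^ k := Real.rpow_natCast 2 k
      have hG2 : ‖iteratedFDerivWithin ℝ (m - i) (gfun α ∘ sfun) Uset p‖ ≤
          B * ((sfun p) ^ (1 - α - (m : ℝ)) * 2 ^ k) := by
        refine hGmi.trans ?_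
        rw [hexp, Real.rpow_add hA0]
        have := mul_le_mul_of_nonneg_left hAi hY.le
        nlinarith
      calc ‖iteratedFDerivWithin ℝ i f2 Uset p‖ *
            ‖iteratedFDerivWithin ℝ (m - i) (gfun α ∘ sfun) Uset p‖
          ≤ π ^ k * (B * ((sfun p) ^ (1 - α - (m : ℝ)) * 2 ^ k)) :=
            mul_le_mul hf2i hG2 (norm_nonneg _) (by positivity)
        _ = π ^ k * 2 ^ k * B * (sfun p) ^ (1 - α - (m : ℝ)) := by ring

lemma outer_bound {α : ℝ} (hα0 : 0 < α) (k : ℕ) :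
    ∃ S : ℝ, 0 < S ∧ ∀ p ∈ Uset, 0 ≤ Real.sin (π * p.1) → 0 ≤ Real.sin (π * p.2) →
      ‖iteratedFDerivWithin ℝ k (fun q => f1 q * (f2 q * (gfun α ∘ sfun) q)) Uset p‖ ≤
        S * (sfun p) ^ ((2:ℝ) - α - (k : ℝ)) := by
  obtain ⟨E, hE, hI⟩ := inner_bound hα0 k
  refine ⟨2 ^ k * (π ^ k * 2 ^ k * E), by positivity, ?_⟩
  intro p hp hs1 hs2
  have hA0 : 0 < sfun p := mem_Uset hp
  have hA2 : sfun p ≤ 2 := sfun_le_two p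
  have hY : (0:ℝ) < (sfun p) ^ ((2:ℝ) - α - (k : ℝ)) := Real.rpow_pos_of_pos hA0 _
  have hinner : ContDiffOn ℝ ω (fun q => f2 q * (gfun α ∘ sfun) q) Uset :=
    f2_contDiff.contDiffOn.mul (hGU_contDiffOn α)
  have hmul := norm_iteratedFDerivWithin_mul_le (N := ω) (n := k) f1_contDiff.contDiffOn
    hinner Uopen.uniqueDiffOn hp le_top
  refine hmul.trans ?_
  have hsum := sum_choose_le k (fun i => ‖iteratedFDerivWithin ℝ i f1 Uset p‖ *
      ‖iteratedFDerivWithin ℝ (k - i) (fun q => f2 q * (gfun α ∘ sfun) q) Uset p‖)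
      (π ^ k * 2 ^ k * E * (sfun p) ^ ((2:ℝ) - α - (k : ℝ))) ?_
  · calc ∑ i ∈ Finset.range (k + 1), (k.choose i : ℝ) *
          ‖iteratedFDerivWithin ℝ i f1 Uset p‖ *
          ‖iteratedFDerivWithin ℝ (k - i) (fun q => f2 q * (gfun α ∘ sfun) q) Uset p‖
        = ∑ i ∈ Finset.range (k + 1), (k.choose i : ℝ) *
          (‖iteratedFDerivWithin ℝ i f1 Uset p‖ *
           ‖iteratedFDerivWithin ℝ (k - i) (fun q => f2 q * (gfun α ∘ sfun) q) Uset p‖) := by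
          simp only [mul_assoc]
      _ ≤ 2 ^ k * (π ^ k * 2 ^ k * E * (sfun p) ^ ((2:ℝ) - α - (k : ℝ))) := hsum
      _ = 2 ^ k * (π ^ k * 2 ^ k * E) * (sfun p) ^ ((2:ℝ) - α - (k : ℝ)) := by ring
  · intro i hi
    have him : i ≤ k := Nat.lt_succ_iff.mp (Finset.mem_range.mp hi)
    rcases Nat.eq_zero_or_pos i with h0 | h1
    · subst h0
      simp only [norm_iteratedFDerivWithin_zero, Nat.sub_zero]
      have hf1p : ‖f1 p‖ ≤ sfun p := by
        rw [f1_apply, Real.norm_eq_abs, abs_of_nonneg hs1, sfun_apply]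
        linarith
      have hIm := hI k le_rfl p hp hs1 hs2
      have hone : (1:ℝ) ≤ π ^ k * 2 ^ k := by
        have h1 : (1:ℝ) ≤ π ^ k := one_le_pow₀ one_le_pi
        have h2 : (1:ℝ) ≤ (2:ℝ) ^ k := one_le_pow₀ one_le_two
        nlinarith
      calc ‖f1 p‖ * ‖iteratedFDerivWithin ℝ k (fun q => f2 q * (gfun α ∘ sfun) q) Uset p‖
          ≤ (sfun p) * (E * (sfun p) ^ (1 - α - (k : ℝ))) :=
            mul_le_mul hf1p hIm (norm_nonneg _) hA0.le
        _ = E * ((sfun p) ^ (1:ℝ) * (sfun p) ^ (1 - α - (k : ℝ))) := by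
            rw [Real.rpow_one]; ring
        _ = E * (sfun p) ^ ((2:ℝ) - α - (k : ℝ)) := by
            rw [← Real.rpow_add hA0]
            have he : (1:ℝ) + (1 - α - (k : ℝ)) = (2:ℝ) - α - (k : ℝ) := by ring
            rw [he]
        _ = 1 * (E * (sfun p) ^ ((2:ℝ) - α - (k : ℝ))) := by ring
        _ ≤ (π ^ k * 2 ^ k) * (E * (sfun p) ^ ((2:ℝ) - α - (k : ℝ))) :=
            mul_le_mul_of_nonneg_right hone (by positivity)
        _ = π ^ k * 2 ^ k * E * (sfun p) ^ ((2:ℝ) - α - (k : ℝ)) := by ring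
    · have hf1i : ‖iteratedFDerivWithin ℝ i f1 Uset p‖ ≤ π ^ k := by
        rw [iteratedFDerivWithin_of_isOpen i Uopen hp]
        exact (f1_bound i p).trans (pow_le_pow_right₀ one_le_pi him)
      have hImi := hI (k - i) (Nat.sub_le k i) p hp hs1 hs2
      have hcast : ((k - i : ℕ) : ℝ) = (k : ℝ) - (i : ℝ) := by
        rw [Nat.cast_sub him]
      have hexp : 1 - α - ((k - i : ℕ) : ℝ) = ((2:ℝ) - α - (k : ℝ)) + ((i : ℝ) - 1) := by
        rw [hcast]; ring
      have hAi : (sfun p) ^ ((i : ℝ) - 1) ≤ 2 ^ k := by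
        calc (sfun p) ^ ((i : ℝ) - 1) ≤ (2:ℝ) ^ ((i : ℝ) - 1) :=
              Real.rpow_le_rpow hA0.le hA2 (by
                have : (1:ℝ) ≤ (i:ℝ) := by exact_mod_cast h1
                linarith)
          _ ≤ (2:ℝ) ^ ((k : ℕ) : ℝ) := Real.rpow_le_rpow_of_exponent_le one_le_two (by
                have : (i : ℝ) ≤ (k : ℝ) := by exact_mod_cast him
                linarith)
          _ = 2 ^ k := Real.rpow_natCast 2 k
      have hI2 : ‖iteratedFDerivWithin ℝ (k - i) (fun q => f2 q * (gfun α ∘ sfun) q) Uset p‖ ≤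
          E * ((sfun p) ^ ((2:ℝ) - α - (k : ℝ)) * 2 ^ k) := by
        refine hImi.trans ?_
        rw [hexp, Real.rpow_add hA0]
        have := mul_le_mul_of_nonneg_left hAi hY.le
        nlinarith
      calc ‖iteratedFDerivWithin ℝ i f1 Uset p‖ *
            ‖iteratedFDerivWithin ℝ (k - i) (fun q => f2 q * (gfun α ∘ sfun) q) Uset p‖
          ≤ π ^ k * (E * ((sfun p) ^ ((2:ℝ) - α - (k : ℝ)) * 2 ^ k)) :=
            mul_le_mul hf1i hI2 (norm_nonneg _) (by positivity)
        _ = π ^ k * 2 ^ k * E * (sfun p) ^ ((2:ℝ) - α - (k : ℝ)) := by ring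

theorem psiα_derivative_bounds (α : ℝ) (hα : α ∈ Ioo (0:ℝ) 1) (k : ℕ) :
    ∃ C : ℝ, 0 < C ∧ ∀ x ∈ Ioo (0:ℝ) 1, ∀ y ∈ Ioo (0:ℝ) 1,
      ‖iteratedFDeriv ℝ k (psiα α) (x, y)‖ ≤
        C * (Real.sin (π * x) + Real.sin (π * y)) ^ ((2:ℝ) - α - k) := by
  obtain ⟨hα0, hα1⟩ := hα
  obtain ⟨S, hS, hout⟩ := outer_bound hα0 k
  have h2α : (0:ℝ) < (2:ℝ) ^ α := Real.rpow_pos_of_pos two_pos α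
  refine ⟨(2:ℝ) ^ α * S, by positivity, ?_⟩
  intro x hx y hy
  have hsx : 0 < Real.sin (π * x) :=
    Real.sin_pos_of_pos_of_lt_pi (mul_pos Real.pi_pos hx.1)
      (mul_lt_of_lt_one_right Real.pi_pos hx.2)
  have hsy : 0 < Real.sin (π * y) :=
    Real.sin_pos_of_pos_of_lt_pi (mul_pos Real.pi_pos hy.1)
      (mul_lt_of_lt_one_right Real.pi_pos hy.2)
  have hpU : (x, y) ∈ Uset := by
    rw [Uset_def]
    show 0 < sfun (x, y)
    rw [sfun_apply]
    exact add_pos hsx hsy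
  have hEq : EqOn (psiα α) ((2:ℝ) ^ α • fun q => f1 q * (f2 q * (gfun α ∘ sfun) q)) Uset := by
    intro q hq
    have h0 : 0 < sfun q := mem_Uset hq
    have h0' : 0 < Real.sin (π * q.1) + Real.sin (π * q.2) := by
      rw [← sfun_apply]; exact h0
    simp only [psiα, Pi.smul_apply, smul_eq_mul, f1_apply, f2_apply, Function.comp_apply,
      gfun, sfun_apply]
    rw [Real.rpow_neg h0'.le, div_eq_mul_inv]
    ring
  have hprod : ContDiffOn ℝ ω (fun q => f1 q * (f2 q * (gfun α ∘ sfun) q)) Uset :=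
    f1_contDiff.contDiffOn.mul (f2_contDiff.contDiffOn.mul (hGU_contDiffOn α))
  calc ‖iteratedFDeriv ℝ k (psiα α) (x, y)‖
      = ‖iteratedFDerivWithin ℝ k (psiα α) Uset (x, y)‖ := by
        rw [iteratedFDerivWithin_of_isOpen k Uopen hpU]
    _ = ‖iteratedFDerivWithin ℝ k
          ((2:ℝ) ^ α • fun q => f1 q * (f2 q * (gfun α ∘ sfun) q)) Uset (x, y)‖ := by
        rw [iteratedFDerivWithin_congr hEq hpU]
    _ = (2:ℝ) ^ α *
          ‖iteratedFDerivWithin ℝ k (fun q => f1 q * (f2 q * (gfun α ∘ sfun) q)) Uset (x, y)‖ := by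
        rw [iteratedFDerivWithin_const_smul_apply ((hprod (x, y) hpU).of_le le_top) Uopen.uniqueDiffOn hpU]
        rw [norm_smul ((2:ℝ) ^ α) (iteratedFDerivWithin ℝ k (fun q => f1 q * (f2 q * (gfun α ∘ sfun) q)) Uset (x, y)), Real.norm_eq_abs, abs_of_pos h2α]
    _ ≤ (2:ℝ) ^ α * (S * (sfun (x, y)) ^ ((2:ℝ) - α - (k : ℝ))) :=
        mul_le_mul_of_nonneg_left (hout (x, y) hpU hsx.le hsy.le) h2α.le
    _ = (2:ℝ) ^ α * S * (Real.sin (π * x) + Real.sin (π * y)) ^ ((2:ℝ) - α - (k : ℝ)) := by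
        rw [sfun_apply]
        ring

end
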